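/- Under the setup of the previous statement, if k hidden units are dead on all of D (strictly negative pre-activations), then the Hessian of the empirical loss over D with respect to all parameters θ = (W₁, b₁, W₂, b₂) has rank at most P − k(I + O + 1), where P = H(I+1) + O(H+1) is the total parameter count. -/

import Mathlib

/-- Parameters of a two-layer network: `(W₁, b₁, W₂, b₂)`. -/
abbrev TwoLayerParams (I Hn O : ℕ) :=
  (Fin Hn → Fin I → ℝ) × (Fin Hn → ℝ) × (Fin O → Fin Hn → ℝ) × (Fin O → ℝ)

/-- Index set for the individual scalar parameters. -/
abbrev TwoLayerIdx (I Hn O : ℕ) :=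
  (Fin Hn × Fin I) ⊕ Fin Hn ⊕ (Fin O × Fin Hn) ⊕ Fin O

/-- Coordinate (basis) vectors in parameter space. -/
def coordVec (I Hn O : ℕ) : TwoLayerIdx I Hn O → TwoLayerParams I Hn O
  | Sum.inl (h, i) => (fun h' i' => if h' = h ∧ i' = i then 1 else 0, 0, 0, 0)
  | Sum.inr (Sum.inl h) => (0, fun h' => if h' = h then 1 else 0, 0, 0)
  | Sum.inr (Sum.inr (Sum.inl (o, h))) =>
      (0, 0, fun o' h' => if o' = o ∧ h' = h then 1 else 0, 0)
  | Sum.inr (Sum.inr (Sum.inr o)) => (0, 0, 0, fun o' => if o' = o then 1 else 0)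

/-- Two-layer ReLU network. -/
noncomputable def twoLayerNet {I Hn O : ℕ} (θ : TwoLayerParams I Hn O) (x : Fin I → ℝ) :
    Fin O → ℝ :=
  fun o => (∑ h, θ.2.2.1 o h * max 0 ((∑ i, θ.1 h i * x i) + θ.2.1 h)) + θ.2.2.2 o

/-- Rank is at most the number of nonzero columns. -/
lemma rank_le_card_compl_of_zero_cols {m n : Type*} [Fintype m] [Fintype n] [DecidableEq n]
    (A : Matrix m n ℝ) (S : Finset n) (hS : ∀ j ∈ S, ∀ i, A i j = 0) :
    A.rank ≤ Sᶜ.card := by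
  classical
  rw [Matrix.rank, Matrix.range_mulVecLin]
  set T : Finset (m → ℝ) := Sᶜ.image (fun j => A.transpose j) with hT
  have hsub : Set.range A.transpose ⊆ insert 0 (T : Set (m → ℝ)) := by
    rintro _ ⟨j, rfl⟩
    by_cases hj : j ∈ S
    · exact Set.mem_insert_iff.2 (Or.inl (funext fun i => hS j hj i))
    · exact Set.mem_insert_iff.2 (Or.inr (by
        simp only [hT, Finset.coe_image, Set.mem_image, Finset.mem_coe, Finset.mem_compl]
        exact ⟨j, hj, rfl⟩))
  calc Module.finrank ℝ (Submodule.span ℝ (Set.range A.transpose))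
      ≤ Module.finrank ℝ (Submodule.span ℝ (insert 0 (T : Set (m → ℝ)))) :=
        Submodule.finrank_mono (Submodule.span_mono hsub)
    _ = Module.finrank ℝ (Submodule.span ℝ (T : Set (m → ℝ))) := by
        rw [Submodule.span_insert_zero]
    _ ≤ T.card := finrank_span_finset_le_card T
    _ ≤ Sᶜ.card := Finset.card_image_le

/-- A function invariant under translations along `v` has vanishing directional derivative. -/
lemma dirDeriv_zero {E : Type*} [NormedAddCommGroup E] [NormedSpace ℝ E] (F : E → ℝ) (v : E)
    (h : ∀ (x : E) (t : ℝ), F (x + t • v) = F x) (x : E) : fderiv ℝ F x v = 0 := by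
  by_cases hd : DifferentiableAt ℝ F x
  · have hg : HasDerivAt (fun t : ℝ => x + t • v) v 0 := by
      simpa using (((hasDerivAt_id (0:ℝ)).smul_const v).const_add x)
    have hF : HasFDerivAt F (fderiv ℝ F x) (x + (0:ℝ) • v) := by
      simpa using hd.hasFDerivAt
    have h1 : HasDerivAt (fun t : ℝ => F (x + t • v)) (fderiv ℝ F x v) 0 := by
      exact hF.comp_hasDerivAt 0 hg
    have h2 : (fun t : ℝ => F (x + t • v)) = fun _ => F x := funext (h x)
    rw [h2] at h1
    exact h1.unique (hasDerivAt_const _ _)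
  · rw [fderiv_zero_of_not_differentiableAt hd]; rfl

/-- Dampened loss: contributions of dead units replaced by `0`. -/
noncomputable def lossD (I Hn O Nd : ℕ) (L : (Fin O → ℝ) → (Fin O → ℝ) → ℝ)
    (data : Fin Nd → (Fin I → ℝ) × (Fin O → ℝ)) (Dset : Finset (Fin Hn))
    (θ : TwoLayerParams I Hn O) : ℝ :=
  ∑ n, L (fun o => (∑ h, θ.2.2.1 o h *
      (if h ∈ Dset then 0 else max 0 ((∑ i, θ.1 h i * (data n).1 i) + θ.2.1 h))) + θ.2.2.2 o)
    (data n).2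

/-- The dead-unit parameter indices. -/
def deadIdx (I Hn O : ℕ) (Dset : Finset (Fin Hn)) : Finset (TwoLayerIdx I Hn O) :=
  ((Dset ×ˢ (Finset.univ : Finset (Fin I))).image Sum.inl) ∪
  (Dset.image (fun j => Sum.inr (Sum.inl j))) ∪
  (((Finset.univ : Finset (Fin O)) ×ˢ Dset).image
    (fun p => Sum.inr (Sum.inr (Sum.inl p))))

lemma lossD_invariant (I Hn O Nd : ℕ) (L : (Fin O → ℝ) → (Fin O → ℝ) → ℝ)
    (data : Fin Nd → (Fin I → ℝ) × (Fin O → ℝ)) (Dset : Finset (Fin Hn))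
    (a : TwoLayerIdx I Hn O) (ha : a ∈ deadIdx I Hn O Dset)
    (θ : TwoLayerParams I Hn O) (t : ℝ) :
    lossD I Hn O Nd L data Dset (θ + t • coordVec I Hn O a)
      = lossD I Hn O Nd L data Dset θ := by
  classical
  obtain ⟨W1, b1, W2, b2⟩ := θ
  simp only [deadIdx, Finset.mem_union, Finset.mem_image, Finset.mem_product,
    Finset.mem_univ, and_true, true_and] at ha
  rcases ha with (⟨⟨j, i⟩, hj, rfl⟩ | ⟨j, hj, rfl⟩) | ⟨⟨o, j⟩, hj, rfl⟩
  · unfold lossD coordVec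
    refine Finset.sum_congr rfl fun n _ => ?_
    congr 1
    funext o
    simp only [Prod.mk_add_mk, Prod.smul_mk, smul_zero, add_zero]
    congr 1
    refine Finset.sum_congr rfl fun h _ => ?_
    by_cases hh : h ∈ Dset
    · simp [hh]
    · have hne : ¬ (h = j) := fun hc => hh (hc ▸ hj)
      simp [hh, hne]
  · unfold lossD coordVec
    refine Finset.sum_congr rfl fun n _ => ?_
    congr 1
    funext o
    simp only [Prod.mk_add_mk, Prod.smul_mk, smul_zero, add_zero, zero_add]
    congr 1
    refine Finset.sum_congr rfl fun h _ => ?_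
    by_cases hh : h ∈ Dset
    · simp [hh]
    · have hne : ¬ (h = j) := fun hc => hh (hc ▸ hj)
      simp [hh, hne]
  · unfold lossD coordVec
    refine Finset.sum_congr rfl fun n _ => ?_
    congr 1
    funext o'
    simp only [Prod.mk_add_mk, Prod.smul_mk, smul_zero, add_zero, zero_add]
    congr 1
    refine Finset.sum_congr rfl fun h _ => ?_
    by_cases hh : h ∈ Dset
    · simp [hh]
    · have hne : ¬ (h = j) := fun hc => hh (hc ▸ hj)
      simp [hh, hne]

/-- If `k` hidden units are dead on the whole dataset, then the Hessian of the
empirical loss has rank at most `P − k(I + O + 1)` with `P = Hn(I+1) + O(Hn+1)`. -/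
theorem dead_neurons_bound_hessian_rank
    (I Hn O Nd : ℕ)
    (L : (Fin O → ℝ) → (Fin O → ℝ) → ℝ)
    (hL : ∀ y, ContDiff ℝ 2 (fun z => L z y))
    (data : Fin Nd → (Fin I → ℝ) × (Fin O → ℝ))
    (θ₀ : TwoLayerParams I Hn O)
    (Dset : Finset (Fin Hn)) (k : ℕ) (hk : Dset.card = k)
    (hdead : ∀ j ∈ Dset, ∀ n : Fin Nd,
      (∑ i, θ₀.1 j i * (data n).1 i) + θ₀.2.1 j < 0) :
    (Matrix.rank (fun a b : TwoLayerIdx I Hn O =>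
        fderiv ℝ
          (fun θ => fderiv ℝ
            (fun θ' : TwoLayerParams I Hn O =>
              ∑ n, L (twoLayerNet θ' (data n).1) (data n).2) θ (coordVec I Hn O b))
          θ₀ (coordVec I Hn O a))) ≤
      (Hn * (I + 1) + O * (Hn + 1)) - k * (I + O + 1) := by
  classical
  set S : Finset (TwoLayerIdx I Hn O) := deadIdx I Hn O Dset with hS
  set U : Set (TwoLayerParams I Hn O) :=
    {θ | ∀ j ∈ Dset, ∀ n : Fin Nd, (∑ i, θ.1 j i * (data n).1 i) + θ.2.1 j < 0} with hUdef
  have hUopen : IsOpen U := by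
    have hrw : U = ⋂ j ∈ Dset, ⋂ n : Fin Nd,
        {θ : TwoLayerParams I Hn O | (∑ i, θ.1 j i * (data n).1 i) + θ.2.1 j < 0} := by
      ext θ; simp [hUdef]
    rw [hrw]
    refine isOpen_biInter_finset fun j _ => isOpen_iInter_of_finite fun n => ?_
    refine isOpen_lt ?_ continuous_const
    refine Continuous.add ?_ ?_
    · exact continuous_finset_sum _ fun i _ =>
        (((continuous_apply i).comp ((continuous_apply j).comp continuous_fst)).fun_mul
          continuous_const)
    · exact (continuous_apply j).comp (continuous_fst.comp continuous_snd)
  have hθ₀U : θ₀ ∈ U := hdead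
  have hagree : Set.EqOn
      (fun θ' : TwoLayerParams I Hn O => ∑ n, L (twoLayerNet θ' (data n).1) (data n).2)
      (lossD I Hn O Nd L data Dset) U := by
    intro θ hθ
    refine Finset.sum_congr rfl fun n _ => ?_
    congr 1
    funext o
    unfold twoLayerNet
    rw [add_left_inj]
    refine Finset.sum_congr rfl fun h _ => ?_
    by_cases hh : h ∈ Dset
    · have hlt := hθ h hh n
      simp [hh, max_eq_left hlt.le]
    · simp [hh]
  have hcol : ∀ b ∈ S, ∀ θ ∈ U,
      fderiv ℝ (fun θ' : TwoLayerParams I Hn O =>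
        ∑ n, L (twoLayerNet θ' (data n).1) (data n).2) θ (coordVec I Hn O b) = 0 := by
    intro b hb θ hθ
    have heq : (fun θ' : TwoLayerParams I Hn O =>
        ∑ n, L (twoLayerNet θ' (data n).1) (data n).2)
        =ᶠ[nhds θ] (lossD I Hn O Nd L data Dset) :=
      Filter.eventuallyEq_of_mem (hUopen.mem_nhds hθ) hagree
    rw [heq.fderiv_eq]
    exact dirDeriv_zero _ _ (fun x t => lossD_invariant I Hn O Nd L data Dset b hb x t) θ
  have hzero : ∀ b ∈ S, ∀ a : TwoLayerIdx I Hn O,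
      fderiv ℝ (fun θ => fderiv ℝ
        (fun θ' : TwoLayerParams I Hn O =>
          ∑ n, L (twoLayerNet θ' (data n).1) (data n).2) θ (coordVec I Hn O b))
        θ₀ (coordVec I Hn O a) = 0 := by
    intro b hb a
    have h0 : (fun θ => fderiv ℝ
        (fun θ' : TwoLayerParams I Hn O =>
          ∑ n, L (twoLayerNet θ' (data n).1) (data n).2) θ (coordVec I Hn O b))
        =ᶠ[nhds θ₀] (fun _ => (0:ℝ)) :=
      Filter.eventuallyEq_of_mem (hUopen.mem_nhds hθ₀U) (fun θ hθ => hcol b hb θ hθ)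
    rw [h0.fderiv_eq, fderiv_fun_const]
    rfl
  refine le_trans (rank_le_card_compl_of_zero_cols _ S (fun b hb a => hzero b hb a)) ?_
  -- cardinality computation
  have hScard : S.card = k * I + k + O * k := by
    rw [hS]
    unfold deadIdx
    rw [Finset.card_union_of_disjoint, Finset.card_union_of_disjoint]
    · rw [Finset.card_image_of_injective _ Sum.inl_injective,
        Finset.card_image_of_injective _
          (fun x y hxy => Sum.inl_injective (Sum.inr_injective hxy)),
        Finset.card_image_of_injective _
          (fun x y hxy => Sum.inl_injective (Sum.inr_injective (Sum.inr_injective hxy)))]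
      simp [hk, mul_comm]
    · simp [Finset.disjoint_left]
    · simp [Finset.disjoint_left]
  have hcompl : Sᶜ.card = Fintype.card (TwoLayerIdx I Hn O) - S.card :=
    Finset.card_compl S
  have hcardIdx : Fintype.card (TwoLayerIdx I Hn O) = Hn * (I + 1) + O * (Hn + 1) := by
    simp [Fintype.card_sum, Fintype.card_prod]
    ring
  have e2 : k * (I + O + 1) = k * I + k + O * k := by ring
  rw [hcompl, hcardIdx, hScard, e2]
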